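/- Let K ⊂ L be a field extension and let A and B be two n-dimensional K-subspaces of L with 1 ∉ B. If there is a strong matching from A to B, then A is locally matched to B. -/

import Mathlib

/-- `a : Fin n → L` is a basis of the `K`-subspace `A` of `L`. -/
def IsBasisOfSubspace {K L : Type*} [Field K] [Field L] [Algebra K L]
    (n : ℕ) (A : Submodule K L) (a : Fin n → L) : Prop :=
  LinearIndependent K a ∧ Submodule.span K (Set.range a) = A

/-- The basis `a` of `A` is matched to the basis `b` of `B`:
for all `x ∈ B` and all `i`, `a i * x ∈ A` implies that `x` lies in the hyperplane of `B`
spanned by the `b j`, `j ≠ i`. -/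
def FamMatched {K L : Type*} [Field K] [Field L] [Algebra K L]
    (A B : Submodule K L) {n : ℕ} (a b : Fin n → L) : Prop :=
  ∀ x ∈ B, ∀ i : Fin n, a i * x ∈ A → x ∈ Submodule.span K (b '' ({i}ᶜ : Set (Fin n)))

/-- `Ã` is `A`-matched to `B̃`: for every basis of `Ã` one can find a basis of `B̃`
with `aᵢ * bᵢ ∉ A` for all `i`. -/
def AMatched {K L : Type*} [Field K] [Field L] [Algebra K L]
    (A Atil Btil : Submodule K L) : Prop :=
  ∀ (n : ℕ) (a : Fin n → L), IsBasisOfSubspace n Atil a →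
    ∃ b : Fin n → L, IsBasisOfSubspace n Btil b ∧ ∀ i, a i * b i ∉ A

/-- `A` is locally matched to `B`: for every intermediate field `K ⊆ H ⊊ L` with
`H ∩ B ≠ {0}` and `aH ⊆ A` for some `a ∈ A`, some non-zero subspace `Ã` of `A`
is `A`-matched to `H ∩ B`. -/
def SubspaceLocallyMatched {K L : Type*} [Field K] [Field L] [Algebra K L]
    (A B : Submodule K L) : Prop :=
  ∀ H : IntermediateField K L, H ≠ ⊤ →
    Subalgebra.toSubmodule H.toSubalgebra ⊓ B ≠ ⊥ →
    (∃ a ∈ A, ∀ h ∈ H, a * h ∈ A) →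
    ∃ Atil : Submodule K L, Atil ≤ A ∧ Atil ≠ ⊥ ∧
      AMatched A Atil (Subalgebra.toSubmodule H.toSubalgebra ⊓ B)

/-- A `K`-linear isomorphism `φ : A → B` is a strong matching if every basis of `A`
is matched to its image basis under `φ`. -/
def IsStrongMatching {K L : Type*} [Field K] [Field L] [Algebra K L]
    (A B : Submodule K L) (φ : A ≃ₗ[K] B) : Prop :=
  ∀ (n : ℕ) (v : Module.Basis (Fin n) K A),
    FamMatched A B (fun i => (v i : L)) (fun i => (φ (v i) : L))

open Submodule Module

/-- In a vector space, given nonzero vectors `a` and `w`, there is a complement `W`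
of `span {a}` with `w ∉ W`. -/
lemma exists_isCompl_not_mem {K V : Type*} [Field K] [AddCommGroup V] [Module K V]
    (a w : V) (ha : a ≠ 0) (hw : w ≠ 0) :
    ∃ W : Submodule K V, IsCompl (Submodule.span K {a}) W ∧ w ∉ W := by
  set S : Submodule K V := Submodule.span K {a} with hS
  by_cases hwS : w ∈ S
  · obtain ⟨W, hW⟩ := Submodule.exists_isCompl S
    refine ⟨W, hW, fun hwW => hw ?_⟩
    exact (Submodule.disjoint_def.mp hW.disjoint) w hwS hwW
  · set U : Submodule K V := Submodule.span K {w + a} with hU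
    obtain ⟨W₁, hW₁⟩ := Submodule.exists_isCompl (S ⊔ U)
    have hdisj : Disjoint S (U ⊔ W₁) := by
      rw [Submodule.disjoint_def]
      intro x hxS hx
      obtain ⟨u, huU, w₁, hw₁, rfl⟩ := Submodule.mem_sup.mp hx
      have hw₁' : w₁ ∈ S ⊔ U := by
        have h1 : (u + w₁) - u ∈ S ⊔ U :=
          Submodule.sub_mem _ (Submodule.mem_sup_left hxS) (Submodule.mem_sup_right huU)
        simpa using h1
      have hw₁0 : w₁ = 0 :=
        (Submodule.disjoint_def.mp hW₁.disjoint) w₁ hw₁' hw₁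
      subst hw₁0
      obtain ⟨c, hc⟩ := Submodule.mem_span_singleton.mp huU
      obtain ⟨k, hk⟩ := Submodule.mem_span_singleton.mp (by simpa using hxS)
      have hc0 : c = 0 := by
        by_contra hc0
        apply hwS
        have hcw : c • w = (k - c) • a := by
          have h2 : c • (w + a) = k • a := by rw [hc, ← hk]
          rw [smul_add] at h2
          rw [sub_smul]
          exact eq_sub_of_add_eq h2
        have hwval : w = (c⁻¹ * (k - c)) • a := by
          rw [mul_smul, ← hcw, inv_smul_smul₀ hc0]
        rw [hS, hwval]
        exact Submodule.smul_mem _ _ (Submodule.mem_span_singleton_self a)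
      simp only [← hc, hc0, zero_smul, add_zero]
    have hcompl : IsCompl S (U ⊔ W₁) := by
      refine ⟨hdisj, ?_⟩
      rw [codisjoint_iff, ← sup_assoc, codisjoint_iff.mp hW₁.codisjoint]
    refine ⟨U ⊔ W₁, hcompl, fun hwW => ?_⟩
    have hwaU : w + a ∈ U ⊔ W₁ :=
      Submodule.mem_sup_left (Submodule.mem_span_singleton_self _)
    have haW : a ∈ U ⊔ W₁ := by
      have h3 := Submodule.sub_mem _ hwaU hwW
      simpa using h3
    have haS : a ∈ S := Submodule.mem_span_singleton_self a
    exact ha ((Submodule.disjoint_def.mp hdisj) a haS haW)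

/-- Key consequence of a strong matching: products of nonzero elements of `A` and `B`
never lie in `A`. -/
lemma mul_not_mem_of_strong {K L : Type*} [Field K] [Field L] [Algebra K L]
    {A B : Submodule K L} [FiniteDimensional K A] {φ : A ≃ₗ[K] B}
    (hφ : IsStrongMatching A B φ) {a x : L} (haA : a ∈ A) (ha : a ≠ 0)
    (hx : x ∈ B) (hx0 : x ≠ 0) : a * x ∉ A := by
  intro haxA
  set a' : A := ⟨a, haA⟩ with ha'def
  set w : A := φ.symm ⟨x, hx⟩ with hwdef
  have ha' : a' ≠ 0 := by
    simp only [ha'def, ne_eq, Submodule.mk_eq_zero]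
    exact ha
  have hw0 : w ≠ 0 := by
    simp only [hwdef, ne_eq, LinearEquiv.map_eq_zero_iff, Submodule.mk_eq_zero]
    exact hx0
  obtain ⟨W, hWc, hwW⟩ := exists_isCompl_not_mem (K := K) a' w ha' hw0
  let bW : Basis (Fin (finrank K W)) K W := (haveI := Module.Free.of_divisionRing K W; Module.finBasis K W)
  have hli : ∀ (c : K), ∀ z ∈ W, c • a' + z = 0 → c = 0 := by
    intro c z hz hcz
    by_contra hc0
    have haW' : a' ∈ W := by
      have h4 : c • a' = -z := eq_neg_of_add_eq_zero_left hcz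
      have h5 : a' = c⁻¹ • (-z) := by rw [← h4, inv_smul_smul₀ hc0]
      rw [h5]
      exact Submodule.smul_mem _ _ (Submodule.neg_mem _ hz)
    have haS : a' ∈ Submodule.span K {a'} := Submodule.mem_span_singleton_self a'
    exact ha' ((Submodule.disjoint_def.mp hWc.disjoint) a' haS haW')
  have hsp : ∀ z : A, ∃ c : K, z + c • a' ∈ W := by
    intro z
    have hz : z ∈ Submodule.span K {a'} ⊔ W := by
      rw [codisjoint_iff.mp hWc.codisjoint]; trivial
    obtain ⟨s, hs, t, ht, hst⟩ := Submodule.mem_sup.mp hz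
    obtain ⟨k, hk⟩ := Submodule.mem_span_singleton.mp hs
    refine ⟨-k, ?_⟩
    have h6 : z + (-k) • a' = t := by
      rw [← hst, ← hk]
      module
    rw [h6]; exact ht
  let v : Basis (Fin (finrank K W + 1)) K A := Basis.mkFinCons a' bW hli hsp
  have hv0 : v 0 = a' := by
    simp only [v, Basis.coe_mkFinCons, Fin.cons_zero]
  have hm := hφ _ v
  have hxmem := hm x hx 0 (by
    show ((v 0 : L)) * x ∈ A
    rw [hv0]; exact haxA)
  have heq : (fun i => ((φ (v i)) : L)) = ⇑B.subtype ∘ (⇑φ ∘ ⇑v) := rfl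
  rw [heq, Set.image_comp, Submodule.span_image] at hxmem
  obtain ⟨y, hyT, hyx⟩ := Submodule.mem_map.mp hxmem
  have hy : y = ⟨x, hx⟩ := Subtype.ext hyx
  have hw2 : w ∈ Submodule.map φ.symm.toLinearMap
      (Submodule.span K ((⇑φ ∘ ⇑v) '' ({0}ᶜ : Set (Fin (finrank K W + 1))))) :=
    ⟨y, hyT, by rw [hy, hwdef]; rfl⟩
  rw [Submodule.map_span, ← Set.image_comp] at hw2
  have hcomp : (⇑φ.symm.toLinearMap ∘ (⇑φ ∘ ⇑v)) = ⇑v := by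
    funext i; simp
  rw [hcomp] at hw2
  have hle : Submodule.span K (⇑v '' ({0}ᶜ : Set (Fin (finrank K W + 1)))) ≤ W := by
    rw [Submodule.span_le]
    rintro _ ⟨j, hj, rfl⟩
    obtain ⟨j', rfl⟩ := Fin.eq_succ_of_ne_zero (by simpa using hj)
    have hvj : v j'.succ = ((bW j' : W) : A) := by
      simp only [v, Basis.coe_mkFinCons, Fin.cons_succ, Function.comp_apply]
    rw [hvj]
    exact (bW j').2
  exact hwW (hle hw2)

/-- If `A` and `B` are `n`-dimensional `K`-subspaces of `L` with `1 ∉ B` and there is a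
strong matching from `A` to `B`, then `A` is locally matched to `B`. -/
theorem locally_matched_of_strong_matching {K L : Type*} [Field K] [Field L] [Algebra K L]
    (n : ℕ) (A B : Submodule K L)
    (hA : Module.finrank K A = n) (hB : Module.finrank K B = n)
    (h1 : (1 : L) ∉ B) (h : ∃ φ : A ≃ₗ[K] B, IsStrongMatching A B φ) :
    SubspaceLocallyMatched A B := by
  obtain ⟨φ, hφ⟩ := h
  intro H hHtop hHB hAH
  by_cases hfin : FiniteDimensional K A
  · -- A finite-dimensional
    haveI := hfin
    haveI : FiniteDimensional K B := Module.Finite.equiv φ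
    set Bt : Submodule K L := Subalgebra.toSubmodule H.toSubalgebra ⊓ B with hBtdef
    have hBtB : Bt ≤ B := inf_le_right
    haveI : FiniteDimensional K Bt := Submodule.finiteDimensional_of_le hBtB
    set Bt' : Submodule K B := Bt.comap B.subtype with hBt'def
    set At' : Submodule K A := Bt'.map φ.symm.toLinearMap with hAt'def
    set At : Submodule K L := At'.map A.subtype with hAtdef
    refine ⟨At, Submodule.map_subtype_le _ _, ?_, ?_⟩
    · -- At ≠ ⊥
      obtain ⟨y, hyBt, hy0⟩ := Submodule.exists_mem_ne_zero_of_ne_bot hHB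
      rw [Submodule.ne_bot_iff]
      have hyB : y ∈ B := hBtB hyBt
      refine ⟨(φ.symm ⟨y, hyB⟩ : A), ⟨φ.symm ⟨y, hyB⟩, ⟨⟨y, hyB⟩, hyBt, rfl⟩, rfl⟩, ?_⟩
      simp only [ne_eq, ZeroMemClass.coe_eq_zero, LinearEquiv.map_eq_zero_iff,
        Submodule.mk_eq_zero]
      exact hy0
    · -- AMatched
      intro m a ⟨hli, hsp⟩
      -- dimension count
      have hrk : finrank K At = m := by
        rw [← hsp, finrank_span_eq_card hli, Fintype.card_fin]
      have hrk1 : finrank K At' = finrank K At :=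
        (Submodule.equivMapOfInjective A.subtype (Submodule.injective_subtype A)
          At').finrank_eq
      have hrk2 : finrank K Bt' = finrank K At' :=
        (Submodule.equivMapOfInjective φ.symm.toLinearMap φ.symm.injective
          Bt').finrank_eq
      have hrk3 : finrank K Bt' = finrank K Bt :=
        (Submodule.comapSubtypeEquivOfLe hBtB).finrank_eq
      have hrkBt : finrank K Bt = m := by omega
      let bas : Basis (Fin m) K Bt := Module.finBasisOfFinrankEq K Bt hrkBt
      refine ⟨fun i => ((bas i : Bt) : L), ⟨?_, ?_⟩, ?_⟩
      · -- linear independence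
        have := bas.linearIndependent.map' Bt.subtype (Submodule.ker_subtype Bt)
        exact this
      · -- span
        have : Set.range (fun i => ((bas i : Bt) : L)) = ⇑Bt.subtype '' Set.range ⇑bas := by
          rw [← Set.range_comp]; rfl
        rw [this, Submodule.span_image, bas.span_eq, Submodule.map_subtype_top]
      · -- products not in A
        intro i
        have haiAt : a i ∈ At := by
          rw [← hsp]; exact Submodule.subset_span (Set.mem_range_self i)
        have haiA : a i ∈ A := Submodule.map_subtype_le _ _ haiAt
        have hai0 : a i ≠ 0 := hli.ne_zero i
        have hbiB : ((bas i : Bt) : L) ∈ B := hBtB (bas i).2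
        have hbi0 : ((bas i : Bt) : L) ≠ 0 := by
          simp only [ne_eq, ZeroMemClass.coe_eq_zero]
          exact bas.ne_zero i
        exact mul_not_mem_of_strong hφ haiA hai0 hbiB hbi0
  · -- A infinite-dimensional: take Atil = A; it has no finite basis, so AMatched is vacuous
    refine ⟨A, le_rfl, ?_, ?_⟩
    · intro hAbot
      apply hfin
      rw [hAbot]
      infer_instance
    · intro m a ⟨hli, hsp⟩
      exfalso
      apply hfin
      have : FiniteDimensional K (Submodule.span K (Set.range a)) :=
        FiniteDimensional.span_of_finite K (Set.finite_range a)
      rwa [hsp] at this
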